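/- The group B_2(C_5) is free abelian of rank 2, freely generated by β_1 = [1,1] and β_2 = [1,2]; moreover [1,4] = [2,3] = 0, [1,3] = β_1 - β_2, [2,2] = 2β_2 - β_1, [2,4] = β_2 - β_1, [3,3] = β_1 - 2β_2, [3,4] = -β_2, and [4,4] = -β_1. -/

import Mathlib

open FreeAbelianGroup

/-- A multiset of characters generates the character group. -/
def Adm {A : Type} [AddCommGroup A] (s : Multiset A) : Prop :=
  AddSubgroup.closure {x | x ∈ s} = ⊤

/-- Admissible symbols: multisets of `n` characters generating `A`. -/
def Symb (A : Type) [AddCommGroup A] (n : ℕ) : Type :=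
  {s : Multiset A // Multiset.card s = n ∧ Adm s}

/-- The blow-up relations (B₂). -/
def blowupRels (A : Type) [AddCommGroup A] (n : ℕ) :
    Set (FreeAbelianGroup (Symb A n)) :=
  {x | ∃ (a b : A) (t : Multiset A)
      (h : Multiset.card (a ::ₘ b ::ₘ t) = n ∧ Adm (a ::ₘ b ::ₘ t))
      (h1 : Multiset.card (a ::ₘ (b - a) ::ₘ t) = n ∧ Adm (a ::ₘ (b - a) ::ₘ t))
      (h2 : Multiset.card ((a - b) ::ₘ b ::ₘ t) = n ∧ Adm ((a - b) ::ₘ b ::ₘ t)),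
      a ≠ b ∧
      x = of (⟨a ::ₘ b ::ₘ t, h⟩ : Symb A n) - of ⟨a ::ₘ (b - a) ::ₘ t, h1⟩
            - of ⟨(a - b) ::ₘ b ::ₘ t, h2⟩} ∪
  {x | ∃ (a : A) (t : Multiset A)
      (h : Multiset.card (a ::ₘ a ::ₘ t) = n ∧ Adm (a ::ₘ a ::ₘ t))
      (h0 : Multiset.card ((0 : A) ::ₘ a ::ₘ t) = n ∧ Adm ((0 : A) ::ₘ a ::ₘ t)),
      x = of (⟨a ::ₘ a ::ₘ t, h⟩ : Symb A n) - of ⟨(0 : A) ::ₘ a ::ₘ t, h0⟩}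

/-- The group of equivariant birational types `𝓑ₙ(G)`, for `A = G^∨`. -/
def B (A : Type) [AddCommGroup A] (n : ℕ) : Type :=
  FreeAbelianGroup (Symb A n) ⧸ AddSubgroup.closure (blowupRels A n)

instance (A : Type) [AddCommGroup A] (n : ℕ) : AddCommGroup (B A n) := by
  unfold B; infer_instance

/-- The class of a symbol in `𝓑ₙ(G)`. -/
def symb {A : Type} [AddCommGroup A] {n : ℕ} (s : Multiset A)
    (h : Multiset.card s = n ∧ Adm s) : B A n :=
  QuotientAddGroup.mk (of (⟨s, h⟩ : Symb A n))

lemma adm_of_unit {N : ℕ} [NeZero N] {s : Multiset (ZMod N)} {u : ZMod N}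
    (hu : u ∈ s) (h : IsUnit u) : Adm s := by
  rw [Adm, AddSubgroup.eq_top_iff']
  intro x
  have hu' : u ∈ AddSubgroup.closure {y | y ∈ s} := AddSubgroup.subset_closure hu
  obtain ⟨v, hv⟩ := h.exists_left_inv
  have hx : x = (x * v).val • u := by
    rw [nsmul_eq_mul, ZMod.natCast_val, ZMod.cast_id, mul_assoc, hv, mul_one]
  rw [hx]
  exact AddSubgroup.nsmul_mem _ hu' _

lemma admU {N : ℕ} [NeZero N] {s : Multiset (ZMod N)} {u v : ZMod N}
    (hu : u ∈ s) (huv : u * v = 1) : Adm s :=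
  adm_of_unit hu ⟨⟨u, v, huv, by rw [mul_comm]; exact huv⟩, rfl⟩

/-- The symbol `[a,b]` in `B₂(C₅)` (every nonzero element of `ℤ/5` is a unit). -/
def c5 (a b : ZMod 5) (u v : ZMod 5) (hu : u ∈ ({a, b} : Multiset (ZMod 5)))
    (huv : u * v = 1) : B (ZMod 5) 2 :=
  symb {a, b} ⟨by simp, admU hu huv⟩

def β₁ : B (ZMod 5) 2 := c5 1 1 1 1 (by decide) (by decide)
def β₂ : B (ZMod 5) 2 := c5 1 2 1 1 (by decide) (by decide)

set_option maxHeartbeats 1000000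

lemma admNZ {a b : ZMod 5} (h : a ≠ 0 ∨ b ≠ 0) : Adm ({a,b} : Multiset (ZMod 5)) := by
  haveI : Fact (Nat.Prime 5) := ⟨by norm_num⟩
  rcases h with h | h
  · exact adm_of_unit (u := a) (by simp) (isUnit_iff_ne_zero.mpr h)
  · exact adm_of_unit (u := b) (by simp) (isUnit_iff_ne_zero.mpr h)

lemma not_adm00 : ¬ Adm ({0,0} : Multiset (ZMod 5)) := by
  intro h
  rw [Adm] at h
  have h1 : ({x | x ∈ ({0,0} : Multiset (ZMod 5))} : Set (ZMod 5)) = {0} := by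
    ext x; simp
  rw [h1, AddSubgroup.closure_singleton_zero] at h
  have : (1 : ZMod 5) ∈ (⊥ : AddSubgroup (ZMod 5)) := h ▸ AddSubgroup.mem_top 1
  rw [AddSubgroup.mem_bot] at this
  exact absurd this (by decide)

abbrev Pf2 (a b : ZMod 5) : Prop :=
  Multiset.card ({a,b} : Multiset (ZMod 5)) = 2 ∧ Adm ({a,b} : Multiset (ZMod 5))

lemma rel1 (a b : ZMod 5) (hab : a ≠ b) (h : Pf2 a b) (h1 : Pf2 a (b-a)) (h2 : Pf2 (a-b) b) :
    symb ({a,b} : Multiset (ZMod 5)) h = symb {a,b-a} h1 + symb {a-b,b} h2 := by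
  have hm : of (⟨{a,b}, h⟩ : Symb (ZMod 5) 2) - of ⟨{a,b-a}, h1⟩ - of ⟨{a-b,b}, h2⟩ ∈
      AddSubgroup.closure (blowupRels (ZMod 5) 2) := by
    apply AddSubgroup.subset_closure
    left
    exact ⟨a, b, 0, h, h1, h2, hab, rfl⟩
  have h0 : (QuotientAddGroup.mk (of (⟨{a,b}, h⟩ : Symb (ZMod 5) 2) - of ⟨{a,b-a}, h1⟩
      - of ⟨{a-b,b}, h2⟩) : B (ZMod 5) 2) = 0 := (QuotientAddGroup.eq_zero_iff _).mpr hm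
  refine sub_eq_zero.mp ((sub_sub _ _ _).symm.trans ?_)
  exact h0

lemma rel2 (a : ZMod 5) (h : Pf2 a a) (h0 : Pf2 0 a) :
    symb ({a,a} : Multiset (ZMod 5)) h = symb {0,a} h0 := by
  have hm : of (⟨{a,a}, h⟩ : Symb (ZMod 5) 2) - of ⟨{0,a}, h0⟩ ∈
      AddSubgroup.closure (blowupRels (ZMod 5) 2) := by
    apply AddSubgroup.subset_closure
    right
    exact ⟨a, 0, h, h0, rfl⟩
  have h0' : (QuotientAddGroup.mk (of (⟨{a,a}, h⟩ : Symb (ZMod 5) 2) - of ⟨{0,a}, h0⟩)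
      : B (ZMod 5) 2) = 0 := (QuotientAddGroup.eq_zero_iff _).mpr hm
  refine sub_eq_zero.mp ?_
  exact h0'

def sy (a b : ZMod 5) (hab : a ≠ 0 ∨ b ≠ 0 := by decide) : B (ZMod 5) 2 :=
  symb {a,b} ⟨by simp, admNZ hab⟩

lemma sy_comm (a b : ZMod 5) (h : a ≠ 0 ∨ b ≠ 0) (h' : b ≠ 0 ∨ a ≠ 0) :
    sy a b h = sy b a h' := by
  unfold sy
  congr 1
  exact Multiset.pair_comm a b

lemma rel1' (a b c d : ZMod 5) (hab : a ≠ b) (hc : b - a = c) (hd : a - b = d)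
    (h : a ≠ 0 ∨ b ≠ 0) (h1 : a ≠ 0 ∨ c ≠ 0) (h2 : d ≠ 0 ∨ b ≠ 0) :
    sy a b h = sy a c h1 + sy d b h2 := by
  subst hc hd
  exact rel1 a b hab _ _ _

lemma rel2' (a : ZMod 5) (h : a ≠ 0 ∨ a ≠ 0) (h0 : (0:ZMod 5) ≠ 0 ∨ a ≠ 0) :
    sy a a h = sy 0 a h0 := rel2 a _ _

-- β₁ = sy 1 1, β₂ = sy 1 2 definitionally
lemma b1_def : β₁ = sy 1 1 := rfl
lemma b2_def : β₂ = sy 1 2 := rfl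

lemma e01 : sy 0 1 = β₁ := (rel2' 1 (by decide) (by decide)).symm
lemma e41 : sy 4 1 = 0 := by
  have h := rel1' 0 1 1 4 (by decide) (by decide) (by decide) (by decide) (by decide) (by decide)
  exact (left_eq_add.mp h)
lemma e14 : sy 1 4 = 0 := (sy_comm 1 4 _ _).trans e41
lemma e32 : sy 3 2 = 0 := by
  have h := rel1' 0 2 2 3 (by decide) (by decide) (by decide) (by decide) (by decide) (by decide)
  exact (left_eq_add.mp h)
lemma e23 : sy 2 3 = 0 := (sy_comm 2 3 _ _).trans e32
lemma e42 : sy 4 2 = β₂ - β₁ := by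
  have h := rel1' 1 2 1 4 (by decide) (by decide) (by decide) (by decide) (by decide) (by decide)
  rw [← b1_def, ← b2_def] at h
  rw [eq_sub_iff_add_eq, add_comm]
  exact h.symm
lemma e24 : sy 2 4 = β₂ - β₁ := (sy_comm 2 4 _ _).trans e42
lemma e43 : sy 4 3 = -β₂ := by
  have h := rel1' 2 3 1 4 (by decide) (by decide) (by decide) (by decide) (by decide) (by decide)
  rw [e23, sy_comm 2 1 (by decide) (by decide), ← b2_def] at h
  rw [eq_neg_iff_add_eq_zero, add_comm]
  exact h.symm
lemma e34 : sy 3 4 = -β₂ := (sy_comm 3 4 _ _).trans e43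
lemma e22 : sy 2 2 = 2 • β₂ - β₁ := by
  have h := rel1' 2 4 2 3 (by decide) (by decide) (by decide) (by decide) (by decide) (by decide)
  rw [e24, e34] at h
  have h2 : sy 2 2 (by decide) = (β₂ - β₁) + β₂ := by rw [h]; abel
  rw [h2]; abel
lemma e13 : sy 1 3 = β₁ - β₂ := by
  have h := rel1' 1 4 3 2 (by decide) (by decide) (by decide) (by decide) (by decide) (by decide)
  rw [e14, e24] at h
  have := h.symm
  rw [add_eq_zero_iff_eq_neg] at this
  rw [this]; abel
lemma e33 : sy 3 3 = β₁ - 2 • β₂ := by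
  have h := rel1' 1 3 2 3 (by decide) (by decide) (by decide) (by decide) (by decide) (by decide)
  rw [e13, ← b2_def] at h
  have : sy 3 3 = (β₁ - β₂) - β₂ := by
    rw [h]; abel
  rw [this]; abel
lemma e44 : sy 4 4 = -β₁ := by
  have h := rel1' 3 4 1 4 (by decide) (by decide) (by decide) (by decide) (by decide) (by decide)
  rw [e34, sy_comm 3 1 (by decide) (by decide), e13] at h
  have h2 : sy 4 4 (by decide) = -β₂ - (β₁ - β₂) := by rw [h]; abel
  rw [h2]; abel
lemma e02 : sy 0 2 = 2 • β₂ - β₁ := (rel2' 2 (by decide) (by decide)).symm.trans e22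
lemma e03 : sy 0 3 = β₁ - 2 • β₂ := (rel2' 3 (by decide) (by decide)).symm.trans e33
lemma e04 : sy 0 4 = -β₁ := (rel2' 4 (by decide) (by decide)).symm.trans e44
lemma e11 : sy 1 1 = β₁ := rfl
lemma e12 : sy 1 2 = β₂ := rfl

def F : ℕ → ℕ → ℕ → ℕ → ℤ × ℤ
  | 2,0,0,0 => (1,0)
  | 0,2,0,0 => (-1,2)
  | 0,0,2,0 => (1,-2)
  | 0,0,0,2 => (-1,0)
  | 1,0,0,0 => (1,0)
  | 0,1,0,0 => (-1,2)
  | 0,0,1,0 => (1,-2)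
  | 0,0,0,1 => (-1,0)
  | 1,1,0,0 => (0,1)
  | 1,0,1,0 => (1,-1)
  | 1,0,0,1 => (0,0)
  | 0,1,1,0 => (0,0)
  | 0,1,0,1 => (-1,1)
  | 0,0,1,1 => (0,-1)
  | _,_,_,_ => (0,0)

def g (s : Multiset (ZMod 5)) : ℤ × ℤ := F (s.count 1) (s.count 2) (s.count 3) (s.count 4)

lemma key1 : ∀ a b : ZMod 5, a ≠ b →
    g (a ::ₘ b ::ₘ 0) = g (a ::ₘ (b-a) ::ₘ 0) + g ((a-b) ::ₘ b ::ₘ 0) := by decide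
lemma key2 : ∀ a : ZMod 5, g (a ::ₘ a ::ₘ 0) = g ((0:ZMod 5) ::ₘ a ::ₘ 0) := by decide

def φ0 : FreeAbelianGroup (Symb (ZMod 5) 2) →+ ℤ × ℤ :=
  FreeAbelianGroup.lift (fun s => g s.1)

lemma card_t_zero {a b : ZMod 5} {t : Multiset (ZMod 5)}
    (h : Multiset.card (a ::ₘ b ::ₘ t) = 2) : t = 0 := by
  simp [Multiset.card_cons] at h
  exact h

lemma φ0_of (s : Symb (ZMod 5) 2) : φ0 (of s) = g s.1 := FreeAbelianGroup.lift_apply_of _ _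

lemma hker : AddSubgroup.closure (blowupRels (ZMod 5) 2) ≤ AddMonoidHom.ker φ0 := by
  rw [AddSubgroup.closure_le]
  intro x hx
  simp only [blowupRels, Set.mem_union, Set.mem_setOf_eq] at hx
  rcases hx with ⟨a,b,t,h,h1,h2,hab,rfl⟩ | ⟨a,t,h,h0,rfl⟩
  · obtain rfl : t = 0 := card_t_zero h.1
    apply (AddMonoidHom.mem_ker (f := φ0)).mpr
    show φ0 (@of (Symb (ZMod 5) 2) ⟨_, h⟩ - @of (Symb (ZMod 5) 2) ⟨_, h1⟩ - @of (Symb (ZMod 5) 2) ⟨_, h2⟩) = 0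
    simp only [SetLike.mem_coe, AddMonoidHom.mem_ker, map_sub, φ0_of]
    have := key1 a b hab
    rw [sub_sub, sub_eq_zero]
    exact (φ0_of ⟨_, h⟩).trans (this.trans (congrArg₂ (· + ·) (φ0_of ⟨_, h1⟩).symm (φ0_of ⟨_, h2⟩).symm))
  · obtain rfl : t = 0 := card_t_zero h.1
    apply (AddMonoidHom.mem_ker (f := φ0)).mpr
    show φ0 (@of (Symb (ZMod 5) 2) ⟨_, h⟩ - @of (Symb (ZMod 5) 2) ⟨_, h0⟩) = 0
    simp only [SetLike.mem_coe, AddMonoidHom.mem_ker, map_sub, φ0_of]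
    rw [sub_eq_zero]
    exact (φ0_of ⟨_, h⟩).trans ((key2 a).trans (φ0_of ⟨_, h0⟩).symm)

def φq : B (ZMod 5) 2 →+ ℤ × ℤ :=
  QuotientAddGroup.lift _ φ0 (fun x hx => hker hx)

lemma φq_symb (s : Multiset (ZMod 5)) (h : Multiset.card s = 2 ∧ Adm s) :
    φq (symb s h) = g s := by
  show φ0 (of ⟨s, h⟩) = g s
  exact FreeAbelianGroup.lift_apply_of _ _

def ψ : ℤ × ℤ →+ B (ZMod 5) 2 :=
  AddMonoidHom.coprod (zmultiplesHom _ β₁) (zmultiplesHom _ β₂)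

lemma ψ_apply (m n : ℤ) : ψ (m, n) = m • β₁ + n • β₂ := by
  simp [ψ, AddMonoidHom.coprod_apply]

lemma cases5 : ∀ a : ZMod 5, a = 0 ∨ a = 1 ∨ a = 2 ∨ a = 3 ∨ a = 4 := by decide

lemma syval (a b : ZMod 5) (h : a ≠ 0 ∨ b ≠ 0) :
    sy a b h = (g {a,b}).1 • β₁ + (g {a,b}).2 • β₂ := by
  rcases cases5 a with rfl|rfl|rfl|rfl|rfl <;> rcases cases5 b with rfl|rfl|rfl|rfl|rfl
  · exact absurd h (by decide)
  · rw [show (g {(0:ZMod 5),(1:ZMod 5)} : ℤ × ℤ) = ((1:ℤ),(0:ℤ)) from by decide]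
    rw [e01]
    show _ = (1:ℤ) • β₁ + (0:ℤ) • β₂
    abel
  · rw [show (g {(0:ZMod 5),(2:ZMod 5)} : ℤ × ℤ) = ((-1:ℤ),(2:ℤ)) from by decide]
    rw [e02]
    show _ = (-1:ℤ) • β₁ + (2:ℤ) • β₂
    abel
  · rw [show (g {(0:ZMod 5),(3:ZMod 5)} : ℤ × ℤ) = ((1:ℤ),(-2:ℤ)) from by decide]
    rw [e03]
    show _ = (1:ℤ) • β₁ + (-2:ℤ) • β₂
    abel
  · rw [show (g {(0:ZMod 5),(4:ZMod 5)} : ℤ × ℤ) = ((-1:ℤ),(0:ℤ)) from by decide]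
    rw [e04]
    show _ = (-1:ℤ) • β₁ + (0:ℤ) • β₂
    abel
  · rw [show (g {(1:ZMod 5),(0:ZMod 5)} : ℤ × ℤ) = ((1:ℤ),(0:ℤ)) from by decide]
    rw [sy_comm 1 0 h (by decide)]
    rw [e01]
    show _ = (1:ℤ) • β₁ + (0:ℤ) • β₂
    abel
  · rw [show (g {(1:ZMod 5),(1:ZMod 5)} : ℤ × ℤ) = ((1:ℤ),(0:ℤ)) from by decide]
    rw [e11]
    show _ = (1:ℤ) • β₁ + (0:ℤ) • β₂
    abel
  · rw [show (g {(1:ZMod 5),(2:ZMod 5)} : ℤ × ℤ) = ((0:ℤ),(1:ℤ)) from by decide]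
    rw [e12]
    show _ = (0:ℤ) • β₁ + (1:ℤ) • β₂
    abel
  · rw [show (g {(1:ZMod 5),(3:ZMod 5)} : ℤ × ℤ) = ((1:ℤ),(-1:ℤ)) from by decide]
    rw [e13]
    show _ = (1:ℤ) • β₁ + (-1:ℤ) • β₂
    abel
  · rw [show (g {(1:ZMod 5),(4:ZMod 5)} : ℤ × ℤ) = ((0:ℤ),(0:ℤ)) from by decide]
    rw [e14]
    show _ = (0:ℤ) • β₁ + (0:ℤ) • β₂
    abel
  · rw [show (g {(2:ZMod 5),(0:ZMod 5)} : ℤ × ℤ) = ((-1:ℤ),(2:ℤ)) from by decide]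
    rw [sy_comm 2 0 h (by decide)]
    rw [e02]
    show _ = (-1:ℤ) • β₁ + (2:ℤ) • β₂
    abel
  · rw [show (g {(2:ZMod 5),(1:ZMod 5)} : ℤ × ℤ) = ((0:ℤ),(1:ℤ)) from by decide]
    rw [sy_comm 2 1 h (by decide)]
    rw [e12]
    show _ = (0:ℤ) • β₁ + (1:ℤ) • β₂
    abel
  · rw [show (g {(2:ZMod 5),(2:ZMod 5)} : ℤ × ℤ) = ((-1:ℤ),(2:ℤ)) from by decide]
    rw [e22]
    show _ = (-1:ℤ) • β₁ + (2:ℤ) • β₂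
    abel
  · rw [show (g {(2:ZMod 5),(3:ZMod 5)} : ℤ × ℤ) = ((0:ℤ),(0:ℤ)) from by decide]
    rw [e23]
    show _ = (0:ℤ) • β₁ + (0:ℤ) • β₂
    abel
  · rw [show (g {(2:ZMod 5),(4:ZMod 5)} : ℤ × ℤ) = ((-1:ℤ),(1:ℤ)) from by decide]
    rw [e24]
    show _ = (-1:ℤ) • β₁ + (1:ℤ) • β₂
    abel
  · rw [show (g {(3:ZMod 5),(0:ZMod 5)} : ℤ × ℤ) = ((1:ℤ),(-2:ℤ)) from by decide]
    rw [sy_comm 3 0 h (by decide)]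
    rw [e03]
    show _ = (1:ℤ) • β₁ + (-2:ℤ) • β₂
    abel
  · rw [show (g {(3:ZMod 5),(1:ZMod 5)} : ℤ × ℤ) = ((1:ℤ),(-1:ℤ)) from by decide]
    rw [sy_comm 3 1 h (by decide)]
    rw [e13]
    show _ = (1:ℤ) • β₁ + (-1:ℤ) • β₂
    abel
  · rw [show (g {(3:ZMod 5),(2:ZMod 5)} : ℤ × ℤ) = ((0:ℤ),(0:ℤ)) from by decide]
    rw [sy_comm 3 2 h (by decide)]
    rw [e23]
    show _ = (0:ℤ) • β₁ + (0:ℤ) • β₂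
    abel
  · rw [show (g {(3:ZMod 5),(3:ZMod 5)} : ℤ × ℤ) = ((1:ℤ),(-2:ℤ)) from by decide]
    rw [e33]
    show _ = (1:ℤ) • β₁ + (-2:ℤ) • β₂
    abel
  · rw [show (g {(3:ZMod 5),(4:ZMod 5)} : ℤ × ℤ) = ((0:ℤ),(-1:ℤ)) from by decide]
    rw [e34]
    show _ = (0:ℤ) • β₁ + (-1:ℤ) • β₂
    abel
  · rw [show (g {(4:ZMod 5),(0:ZMod 5)} : ℤ × ℤ) = ((-1:ℤ),(0:ℤ)) from by decide]
    rw [sy_comm 4 0 h (by decide)]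
    rw [e04]
    show _ = (-1:ℤ) • β₁ + (0:ℤ) • β₂
    abel
  · rw [show (g {(4:ZMod 5),(1:ZMod 5)} : ℤ × ℤ) = ((0:ℤ),(0:ℤ)) from by decide]
    rw [sy_comm 4 1 h (by decide)]
    rw [e14]
    show _ = (0:ℤ) • β₁ + (0:ℤ) • β₂
    abel
  · rw [show (g {(4:ZMod 5),(2:ZMod 5)} : ℤ × ℤ) = ((-1:ℤ),(1:ℤ)) from by decide]
    rw [sy_comm 4 2 h (by decide)]
    rw [e24]
    show _ = (-1:ℤ) • β₁ + (1:ℤ) • β₂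
    abel
  · rw [show (g {(4:ZMod 5),(3:ZMod 5)} : ℤ × ℤ) = ((0:ℤ),(-1:ℤ)) from by decide]
    rw [sy_comm 4 3 h (by decide)]
    rw [e34]
    show _ = (0:ℤ) • β₁ + (-1:ℤ) • β₂
    abel
  · rw [show (g {(4:ZMod 5),(4:ZMod 5)} : ℤ × ℤ) = ((-1:ℤ),(0:ℤ)) from by decide]
    rw [e44]
    show _ = (-1:ℤ) • β₁ + (0:ℤ) • β₂
    abel

lemma ψg (p : ℤ × ℤ) : ψ p = p.1 • β₁ + p.2 • β₂ := by
  cases p; exact ψ_apply _ _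

lemma φq_b1 : φq β₁ = (1,0) := by
  show φq (symb {1,1} _) = (1,0)
  rw [φq_symb]; decide

lemma φq_b2 : φq β₂ = (0,1) := by
  show φq (symb {1,2} _) = (0,1)
  rw [φq_symb]; decide

lemma φψ (p : ℤ × ℤ) : φq (ψ p) = p := by
  obtain ⟨m, n⟩ := p
  rw [ψ_apply, map_add, map_zsmul, map_zsmul, φq_b1, φq_b2]
  ext <;> simp

lemma ψφ (x : B (ZMod 5) 2) : ψ (φq x) = x := by
  refine QuotientAddGroup.induction_on x ?_
  intro y
  refine FreeAbelianGroup.induction_on y ?_ ?_ ?_ ?_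
  · show ψ (φq 0) = 0; rw [map_zero, map_zero]
  · intro s
    obtain ⟨m, hcard, hadm⟩ := s
    obtain ⟨a, b, rfl⟩ := Multiset.card_eq_two.mp hcard
    have h : a ≠ 0 ∨ b ≠ 0 := by
      by_contra hc
      push_neg at hc
      obtain ⟨rfl, rfl⟩ := hc
      exact not_adm00 hadm
    show ψ (φq (symb {a,b} ⟨by simp, admNZ h⟩)) = sy a b h
    rw [φq_symb, ψg, ← syval a b h]
  · intro s ih
    rw [show ((QuotientAddGroup.mk (-of s) : B (ZMod 5) 2)) = -QuotientAddGroup.mk (of s) from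
      QuotientAddGroup.mk_neg _ _] at *
    erw [map_neg, map_neg, ih]; rfl
  · intro p q ihp ihq
    rw [show ((QuotientAddGroup.mk (p + q) : B (ZMod 5) 2)) =
      QuotientAddGroup.mk p + QuotientAddGroup.mk q from QuotientAddGroup.mk_add _ _ _] at *
    erw [map_add, map_add, ihp, ihq]; rfl

def φe : B (ZMod 5) 2 ≃+ ℤ × ℤ :=
  AddEquiv.mk' ⟨φq, ψ, ψφ, φψ⟩ (map_add φq)


/-- `B₂(C₅)` is free abelian of rank 2, freely generated by
`β₁ = [1,1]`, `β₂ = [1,2]`, with the listed expressions for the other symbols. -/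
theorem B2_C5_free_rank_two :
    (∃ φ : B (ZMod 5) 2 ≃+ ℤ × ℤ, φ β₁ = (1, 0) ∧ φ β₂ = (0, 1)) ∧
    c5 1 4 1 1 (by decide) (by decide) = 0 ∧
    c5 2 3 2 3 (by decide) (by decide) = 0 ∧
    c5 1 3 1 1 (by decide) (by decide) = β₁ - β₂ ∧
    c5 2 2 2 3 (by decide) (by decide) = 2 • β₂ - β₁ ∧
    c5 2 4 2 3 (by decide) (by decide) = β₂ - β₁ ∧
    c5 3 3 3 2 (by decide) (by decide) = β₁ - 2 • β₂ ∧
    c5 3 4 3 2 (by decide) (by decide) = -β₂ ∧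
    c5 4 4 4 4 (by decide) (by decide) = -β₁ :=
  ⟨⟨φe, φq_b1, φq_b2⟩, e14, e23, e13, e22, e24, e33, e34, e44⟩
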